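/- arXiv:2404.08898 — 2 statements merged into one kernel-verified Lean document; each statement's English description precedes it below -/
import Mathlib

section
/- If the uniform-kernel case holds and the set Θ₁ \ Θ' = {θ : π_ε(θ|y) > 0} \ {θ : h(θ) ≤ ε} has Lebesgue measure zero, then the ejMCMC posterior π̂_ε(·|y) equals the standard ABC posterior π_ε(·|y) almost everywhere. -/
open MeasureTheory

/-- In the uniform-kernel case, if Θ₁ \ Θ' = {π_ε(·|y) > 0} \ {h ≤ ε}
has measure zero, then the ejMCMC posterior equals the ABC posterior almost
everywhere. -/
theorem ejMCMC_posterior_ae_eq_ABC_posterior {Θ : Type*} [MeasurableSpace Θ]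
    (μ : Measure Θ)
    (π I : Θ → ℝ)            -- I θ = ∫ p(x|θ)1{Δ(x,y) ≤ ε} dx
    (h : Θ → ℝ) (ε : ℝ)
    (hπ : ∀ θ, 0 ≤ π θ) (hI : ∀ θ, 0 ≤ I θ)
    (Z1 Z2 : ℝ)
    (hZ1 : Z1 = ∫ θ, π θ * I θ ∂μ) (hZ1pos : 0 < Z1)
    (hZ2 : Z2 = ∫ θ, π θ * I θ * (if h θ ≤ ε then (1 : ℝ) else 0) ∂μ)
    (hZ2pos : 0 < Z2)
    (πABC πhat : Θ → ℝ)
    (hπABC : ∀ θ, πABC θ = π θ * I θ / Z1)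
    (hπhat : ∀ θ, πhat θ = π θ * I θ * (if h θ ≤ ε then (1 : ℝ) else 0) / Z2)
    (hnull : μ ({θ | 0 < πABC θ} \ {θ | h θ ≤ ε}) = 0)
    (hint : Integrable (fun θ => π θ * I θ) μ) :
    ∀ᵐ θ ∂μ, πhat θ = πABC θ := by
  have hae : ∀ᵐ θ ∂μ, θ ∉ ({θ | 0 < πABC θ} \ {θ | h θ ≤ ε}) :=
    MeasureTheory.measure_eq_zero_iff_ae_notMem.mp hnull
  -- key pointwise fact off the null set
  have key : ∀ θ, θ ∉ ({θ | 0 < πABC θ} \ {θ | h θ ≤ ε}) →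
      π θ * I θ * (if h θ ≤ ε then (1 : ℝ) else 0) = π θ * I θ := by
    intro θ hθ
    by_cases hle : h θ ≤ ε
    · simp [hle]
    · have h1 : ¬ (0 < πABC θ) := fun hp => hθ ⟨hp, hle⟩
      have h0 : πABC θ = 0 := by
        have := div_nonneg (mul_nonneg (hπ θ) (hI θ)) hZ1pos.le
        rw [hπABC θ] at h1 ⊢
        linarith [not_lt.mp h1, this]
      have : π θ * I θ = 0 := by
        have hz : π θ * I θ / Z1 = 0 := by rw [← hπABC θ, h0]
        rcases div_eq_zero_iff.mp hz with h' | h'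
        · exact h'
        · exact absurd h' hZ1pos.ne'
      simp [hle, this]
  -- Z2 = Z1
  have hZeq : Z2 = Z1 := by
    rw [hZ1, hZ2]
    exact integral_congr_ae (hae.mono fun θ hθ => key θ hθ)
  filter_upwards [hae] with θ hθ
  rw [hπhat θ, hπABC θ, key θ hθ, hZeq]
end

section
/- Let g, f be probability densities with g ∝ G and f ∝ F pointwise, where 0 ≤ G(θ) ≤ F(θ) for all θ and ∫(F − G) ≤ a·∫F for some a ∈ [0,1). Then the L¹ distance satisfies ∫|g − f| dθ ≤ 2a/(1−a), which tends to 0 as a → 0. -/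
open MeasureTheory

/-- If g ∝ G and f ∝ F with 0 ≤ G ≤ F pointwise and
∫(F − G) ≤ a·∫F with a ∈ [0,1), then ∫|g − f| ≤ 2a/(1−a). -/
theorem L1_distance_of_normalized_densities {Θ : Type*} [MeasurableSpace Θ]
    (μ : Measure Θ) (F G : Θ → ℝ) (a : ℝ)
    (ha0 : 0 ≤ a) (ha1 : a < 1)
    (hG0 : ∀ θ, 0 ≤ G θ) (hGF : ∀ θ, G θ ≤ F θ)
    (hFint : Integrable F μ) (hGint : Integrable G μ)
    (hFpos : 0 < ∫ θ, F θ ∂μ) (hGpos : 0 < ∫ θ, G θ ∂μ)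
    (hdiff : ∫ θ, (F θ - G θ) ∂μ ≤ a * ∫ θ, F θ ∂μ)
    (f g : Θ → ℝ)
    (hf : ∀ θ, f θ = F θ / ∫ t, F t ∂μ)
    (hg : ∀ θ, g θ = G θ / ∫ t, G t ∂μ) :
    ∫ θ, |g θ - f θ| ∂μ ≤ 2 * a / (1 - a) := by
  set IF := ∫ θ, F θ ∂μ with hIF
  set IG := ∫ θ, G θ ∂μ with hIG
  have hIFne : IF ≠ 0 := ne_of_gt hFpos
  have hIGne : IG ≠ 0 := ne_of_gt hGpos
  have hIGF : IG ≤ IF := integral_mono hGint hFint hGF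
  have hcoef : 0 ≤ 1 / IG - 1 / IF := by
    have h1 : 1 / IF ≤ 1 / IG := one_div_le_one_div_of_le hGpos hIGF
    linarith
  -- pointwise bound
  have hpt : ∀ θ, |g θ - f θ| ≤ G θ * (1 / IG - 1 / IF) + (F θ - G θ) / IF := by
    intro θ
    have heq : g θ - f θ = G θ * (1 / IG - 1 / IF) - (F θ - G θ) / IF := by
      rw [hf, hg]; field_simp; ring
    rw [heq]
    have h1 : |G θ * (1 / IG - 1 / IF)| = G θ * (1 / IG - 1 / IF) :=
      abs_of_nonneg (mul_nonneg (hG0 θ) hcoef)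
    have h2 : |(F θ - G θ) / IF| = (F θ - G θ) / IF :=
      abs_of_nonneg (div_nonneg (by linarith [hGF θ]) hFpos.le)
    calc |G θ * (1 / IG - 1 / IF) - (F θ - G θ) / IF|
        ≤ |G θ * (1 / IG - 1 / IF)| + |(F θ - G θ) / IF| := abs_sub _ _
      _ = G θ * (1 / IG - 1 / IF) + (F θ - G θ) / IF := by rw [h1, h2]
  -- integrability
  have hfint : Integrable f μ := by
    have := hFint.div_const IF
    exact this.congr (Filter.Eventually.of_forall fun θ => (hf θ).symm)
  have hgint : Integrable g μ := by
    have := hGint.div_const IG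
    exact this.congr (Filter.Eventually.of_forall fun θ => (hg θ).symm)
  have habs : Integrable (fun θ => |g θ - f θ|) μ := (hgint.sub hfint).abs
  have hbint : Integrable (fun θ => G θ * (1 / IG - 1 / IF) + (F θ - G θ) / IF) μ :=
    (hGint.mul_const _).add ((hFint.sub hGint).div_const _)
  have hle : ∫ θ, |g θ - f θ| ∂μ ≤ ∫ θ, (G θ * (1 / IG - 1 / IF) + (F θ - G θ) / IF) ∂μ :=
    integral_mono habs hbint hpt
  have hval : ∫ θ, (G θ * (1 / IG - 1 / IF) + (F θ - G θ) / IF) ∂μ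
      = IG * (1 / IG - 1 / IF) + (IF - IG) / IF := by
    have hsubint : Integrable (fun θ => F θ - G θ) μ := hFint.sub hGint
    rw [integral_add (hGint.mul_const _) (hsubint.div_const _),
      integral_mul_const, integral_div, integral_sub hFint hGint]
  have hdiff' : IF - IG ≤ a * IF := by
    rwa [integral_sub hFint hGint] at hdiff
  have h2a : IG * (1 / IG - 1 / IF) + (IF - IG) / IF ≤ 2 * a := by
    have he : IG * (1 / IG - 1 / IF) + (IF - IG) / IF = 2 * ((IF - IG) / IF) := by
      field_simp; ring
    rw [he]
    have hq : (IF - IG) / IF ≤ a := by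
      rw [div_le_iff₀ hFpos]; linarith
    linarith
  have hfin : 2 * a ≤ 2 * a / (1 - a) := by
    have h1a : 0 < 1 - a := by linarith
    rw [le_div_iff₀ h1a]
    nlinarith
  linarith
end
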